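/- arXiv:2503.11356 — 4 statements merged into one kernel-verified Lean document; each statement's English description precedes it below -/
import Mathlib

section
/- The function g(V) = Σ_{k=1}^K ω_k log det(I + V_k^H H_k^H F̃_k(V)^{-1} H_k V_k), where F̃_k(V) = ((σ²/P) Σ_j ‖V_j‖_F²) I + Σ_{j≠k} H_k V_j V_j^H H_k^H, satisfies g(cV) = g(V) for every nonzero scalar c ∈ ℂ. -/
open Matrix Finset


lemma smul_inv_aux {N : ℕ} (s : ℂ) (hs : s ≠ 0) (A : Matrix (Fin N) (Fin N) ℂ) :
    (s • A)⁻¹ = s⁻¹ • A⁻¹ := by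
  rcases Nat.eq_zero_or_pos N with h | h
  · subst h; apply Subsingleton.elim
  · rw [Matrix.inv_def, Matrix.inv_def, Matrix.adjugate_smul, Matrix.det_smul,
      Fintype.card_fin, smul_smul, smul_smul]
    congr 1
    have hN : s ^ N = s ^ (N - 1) * s := by
      rw [← pow_succ, Nat.sub_add_cancel h]
    have hs1 : s ^ (N - 1) ≠ 0 := pow_ne_zero _ hs
    simp only [Ring.inverse_eq_inv']
    rw [hN, mul_inv, mul_inv]
    rcases eq_or_ne A.det 0 with hd | hd
    · simp [hd]
    · field_simp

/-- The WSR objective `g(V) = Σ_k ω_k log|det(I + V_kᴴ H_kᴴ F̃_k(V)⁻¹ H_k V_k)|`, with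
`F̃_k(V) = ((σ²/P) Σ_j ‖V_j‖_F²) I + Σ_{j≠k} H_k V_j V_jᴴ H_kᴴ`, is scale-invariant:
`g (c • V) = g V` for every nonzero complex scalar `c`. -/
theorem stmt1 {M N d K : ℕ}
    (H : Fin K → Matrix (Fin N) (Fin M) ℂ)
    (ω : Fin K → ℝ) (hω : ∀ k, 0 < ω k)
    (σ2 P : ℝ) (hσ : 0 < σ2) (hP : 0 < P)
    (F : (Fin K → Matrix (Fin M) (Fin d) ℂ) → Fin K → Matrix (Fin N) (Fin N) ℂ)
    (hF : ∀ V k, F V k =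
      (((σ2 / P) * ∑ j, ∑ a, ∑ b, Complex.normSq (V j a b) : ℝ) : ℂ) • (1 : Matrix (Fin N) (Fin N) ℂ)
        + ∑ j ∈ Finset.univ.erase k, H k * V j * (V j)ᴴ * (H k)ᴴ)
    (g : (Fin K → Matrix (Fin M) (Fin d) ℂ) → ℝ)
    (hg : ∀ V, g V = ∑ k, ω k *
      Real.log ‖(1 + (V k)ᴴ * (H k)ᴴ * (F V k)⁻¹ * (H k) * V k).det‖)
    (V : Fin K → Matrix (Fin M) (Fin d) ℂ) (hV : V ≠ 0)
    (c : ℂ) (hc : c ≠ 0) :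
    g (fun k => c • V k) = g V := by
  set nc : ℂ := (Complex.normSq c : ℂ) with hnc
  have hnc0 : nc ≠ 0 := by
    simp [hnc, Complex.normSq_eq_zero, hc]
  have hccs : star c * c = nc := by
    rw [hnc, Complex.normSq_eq_conj_mul_self]; rfl
  have hkey : ∀ k, F (fun k => c • V k) k = nc • F V k := by
    intro k
    rw [hF, hF, smul_add]
    congr 1
    · rw [smul_smul]
      congr 1
      push_cast [Matrix.smul_apply, smul_eq_mul, Complex.normSq_mul, ← Finset.mul_sum]
      ring
    · rw [Finset.smul_sum]
      refine Finset.sum_congr rfl fun j _ => ?_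
      rw [Matrix.conjTranspose_smul, Matrix.mul_smul, Matrix.smul_mul, Matrix.mul_smul,
        Matrix.smul_mul, Matrix.smul_mul, smul_smul, hccs]
  rw [hg, hg]
  refine Finset.sum_congr rfl fun k _ => ?_
  rw [hkey k, smul_inv_aux nc hnc0]
  simp only [Matrix.conjTranspose_smul, Matrix.smul_mul, Matrix.mul_smul, smul_smul]
  rw [show c * (nc⁻¹ * star c) = 1 by
    rw [mul_comm nc⁻¹ (star c), ← mul_assoc, mul_comm c (star c), hccs,
      mul_inv_cancel₀ hnc0], one_smul]
end

section
/- With step sizes η_t = ((λ_M+λ₁)/2 + ((λ_M−λ₁)/2)·cos((t+1/2)π/T))^{−1} for t = 0,…,T−1, the polynomial ∏_{t=0}^{T−1}(1 − η_t λ), as a function of λ, equals S(x(λ))/S(γ) under the affine change of variable x(λ) = (λ_M+λ₁)/(λ_M−λ₁) − 2λ/(λ_M−λ₁), where γ = (λ_M+λ₁)/(λ_M−λ₁) and S is the degree-T Chebyshev polynomial of the first kind. -/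
open Polynomial in
lemma cheb_aux (n : ℕ) : (Polynomial.Chebyshev.T ℝ n).natDegree ≤ n ∧
    (Polynomial.Chebyshev.T ℝ n).coeff n = 2 ^ (n - 1) := by
  induction n using Nat.strong_induction_on with
  | _ n ih =>
    match n with
    | 0 => simp [Polynomial.Chebyshev.T_zero]
    | 1 => simp [Polynomial.Chebyshev.T_one]
    | (n + 2) =>
      have h1 := ih (n + 1) (by omega)
      have h0 := ih n (by omega)
      have hrec : Polynomial.Chebyshev.T ℝ ((n : ℤ) + 2)
          = 2 * X * Polynomial.Chebyshev.T ℝ ((n : ℤ) + 1) - Polynomial.Chebyshev.T ℝ n :=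
        Polynomial.Chebyshev.T_add_two ℝ n
      have hcast : ((n + 2 : ℕ) : ℤ) = (n : ℤ) + 2 := by push_cast; ring
      have hcast1 : ((n + 1 : ℕ) : ℤ) = (n : ℤ) + 1 := by push_cast; ring
      rw [hcast, hrec, ← hcast1]
      constructor
      · refine le_trans (Polynomial.natDegree_sub_le _ _) ?_
        simp only [max_le_iff]
        constructor
        · refine le_trans (Polynomial.natDegree_mul_le) ?_
          have : (2 * X : ℝ[X]).natDegree ≤ 1 := by
            refine le_trans (Polynomial.natDegree_mul_le) ?_
            simp
          omega
        · omega
      · have hXc : (2 * X * Polynomial.Chebyshev.T ℝ ((n+1 : ℕ) : ℤ)).coeff (n + 2)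
            = 2 * (Polynomial.Chebyshev.T ℝ ((n+1 : ℕ) : ℤ)).coeff (n + 1) := by
          rw [mul_assoc, Polynomial.coeff_ofNat_mul, Polynomial.coeff_X_mul]
        have hlow : (Polynomial.Chebyshev.T ℝ (n : ℕ)).coeff (n + 2) = 0 :=
          Polynomial.coeff_eq_zero_of_natDegree_lt (by omega)
        rw [Polynomial.coeff_sub, hXc, h1.2, hlow]
        simp only [Nat.add_sub_cancel]
        rw [sub_zero, ← pow_succ']
        norm_num

open Polynomial in
lemma cheb_prod (T : ℕ) (hT : 1 ≤ T) :
    Polynomial.Chebyshev.T ℝ T = C ((2:ℝ) ^ (T - 1)) *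
      ∏ t ∈ Finset.range T, (X - C (Real.cos (((t : ℝ) + 1/2) * Real.pi / T))) := by
  set c : ℕ → ℝ := fun t => Real.cos (((t : ℝ) + 1/2) * Real.pi / T) with hc
  set Q : ℝ[X] := ∏ t ∈ Finset.range T, (X - C (c t)) with hQ
  have hTpos : (0:ℝ) < T := by exact_mod_cast hT
  have hQmonic : Q.Monic := monic_prod_of_monic _ _ fun t _ => monic_X_sub_C _
  have hQdeg : Q.natDegree = T := by
    rw [hQ, natDegree_prod _ _ (fun t _ => X_sub_C_ne_zero _)]
    simp
  set D : ℝ[X] := Polynomial.Chebyshev.T ℝ T - C ((2:ℝ) ^ (T - 1)) * Q with hD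
  have hθ : ∀ t : ℕ, t < T → (T : ℝ) * (((t : ℝ) + 1/2) * Real.pi / T)
      = (t : ℝ) * Real.pi + Real.pi / 2 := by
    intro t ht
    field_simp
  have heval : ∀ t : Fin T, D.eval (c t) = 0 := by
    intro t
    have h1 : (Polynomial.Chebyshev.T ℝ T).eval (c t) = 0 := by
      have := Polynomial.Chebyshev.T_real_cos (((t : ℝ) + 1/2) * Real.pi / T) (T : ℤ)
      rw [hc]
      simp only [Int.cast_natCast] at this
      rw [this, hθ t t.2, Real.cos_add]
      simp [Real.sin_nat_mul_pi, Real.cos_nat_mul_two_pi]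
    have h2 : Q.eval (c t) = 0 := by
      rw [hQ, eval_prod]
      refine Finset.prod_eq_zero (Finset.mem_range.mpr t.2) ?_
      simp
    simp [hD, h1, h2]
  have hinj : Function.Injective (fun t : Fin T => c t) := by
    intro a b hab
    have hmem : ∀ t : Fin T, ((t : ℝ) + 1/2) * Real.pi / T ∈ Set.Icc 0 Real.pi := by
      intro t
      constructor
      · positivity
      · rw [div_le_iff₀ hTpos]
        have h1 : (t : ℝ) + 1/2 ≤ T := by
          have : (t : ℝ) + 1 ≤ T := by exact_mod_cast t.2
          linarith
        nlinarith [Real.pi_pos]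
    have := Real.injOn_cos (hmem a) (hmem b) hab
    have hπ : Real.pi / T ≠ 0 := by positivity
    have : (a : ℝ) = b := by
      field_simp at this
      linarith
    exact Fin.ext (by exact_mod_cast this)
  have hcoeff : D.coeff T = 0 := by
    rw [hD, coeff_sub, (cheb_aux T).2, coeff_C_mul, ← hQdeg, ← leadingCoeff, hQmonic.leadingCoeff]
    ring
  have hdeg : D.natDegree ≤ T := by
    refine le_trans (natDegree_sub_le _ _) ?_
    simp only [max_le_iff]
    exact ⟨(cheb_aux T).1, le_trans (natDegree_C_mul_le _ _) hQdeg.le⟩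
  have hD0 : D = 0 := by
    by_cases h0 : D = 0
    · exact h0
    · have hne : D.natDegree ≠ T := by
        intro h
        apply h0
        have := hcoeff
        rw [← h, ← leadingCoeff] at this
        exact leadingCoeff_eq_zero.mp this
      exact eq_zero_of_natDegree_lt_card_of_eval_eq_zero D hinj heval
        (by rw [Fintype.card_fin]; omega)
  have := sub_eq_zero.mp hD0
  exact this

/-- With Chebyshev step sizes `η_t = ((λ_M+λ₁)/2 + ((λ_M−λ₁)/2) cos((t+1/2)π/T))⁻¹`,
the polynomial `∏_{t<T} (1 − η_t λ)` equals `S(x(λ))/S(γ)` under the affine change of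
variable `x(λ) = (λ_M+λ₁)/(λ_M−λ₁) − 2λ/(λ_M−λ₁)`, with `γ = (λ_M+λ₁)/(λ_M−λ₁)` and `S`
the degree-`T` Chebyshev polynomial of the first kind. -/
theorem stmt13 (lam1 lamM : ℝ) (h1 : 0 < lam1) (h2 : lam1 < lamM)
    (T : ℕ) (hT : 1 ≤ T)
    (η : ℕ → ℝ)
    (hη : ∀ t, η t = ((lamM + lam1) / 2
        + ((lamM - lam1) / 2) * Real.cos (((t : ℝ) + 1 / 2) * Real.pi / T))⁻¹)
    (γ : ℝ) (hγ : γ = (lamM + lam1) / (lamM - lam1))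
    (x : ℝ → ℝ) (hx : ∀ l, x l = (lamM + lam1) / (lamM - lam1) - 2 * l / (lamM - lam1)) :
    ∀ l : ℝ, ∏ t ∈ Finset.range T, (1 - η t * l)
      = (Polynomial.Chebyshev.T ℝ T).eval (x l) / (Polynomial.Chebyshev.T ℝ T).eval γ := by
  intro l
  set c : ℕ → ℝ := fun t => Real.cos (((t : ℝ) + 1/2) * Real.pi / T) with hc
  set r : ℝ := (lamM - lam1) / 2 with hr
  set m : ℝ := (lamM + lam1) / 2 with hm
  have hrpos : 0 < r := by rw [hr]; linarith
  have hml : lamM - lam1 ≠ 0 := by linarith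
  have hTpos : (0:ℝ) < T := by exact_mod_cast hT
  -- basic bounds
  have hcub : ∀ t, |c t| ≤ 1 := fun t => Real.abs_cos_le_one _
  have hdpos : ∀ t, 0 < m + r * c t := by
    intro t
    have h := abs_le.mp (hcub t)
    nlinarith
  -- evaluation of Chebyshev via product formula
  have hevalT : ∀ y : ℝ, (Polynomial.Chebyshev.T ℝ T).eval y
      = 2 ^ (T - 1) * ∏ t ∈ Finset.range T, (y - c t) := by
    intro y
    rw [cheb_prod T hT]
    simp [Polynomial.eval_prod, hc]
  -- reflection: ∏ (y + c t) = ∏ (y - c t)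
  have hrefl : ∀ y : ℝ, ∏ t ∈ Finset.range T, (y + c t) = ∏ t ∈ Finset.range T, (y - c t) := by
    intro y
    rw [← Finset.prod_range_reflect (fun t => y + c t) T]
    refine Finset.prod_congr rfl ?_
    intro t ht
    rw [Finset.mem_range] at ht
    have hcast : ((T - 1 - t : ℕ) : ℝ) = (T : ℝ) - 1 - t := by
      have : T - 1 - t + (t + 1) = T := by omega
      have := congrArg (fun k : ℕ => (k : ℝ)) this
      push_cast at this
      linarith
    have harg : (((T - 1 - t : ℕ) : ℝ) + 1/2) * Real.pi / T
        = Real.pi - (((t : ℝ) + 1/2) * Real.pi / T) := by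
      rw [hcast]
      field_simp
      ring
    simp only [hc, harg, Real.cos_pi_sub]
    ring
  -- each factor
  have hfac : ∀ t, (1 - η t * l) = (r * (x l + c t)) / (r * (γ + c t)) := by
    intro t
    have hd := hdpos t
    have hne : m + r * c t ≠ 0 := ne_of_gt hd
    have hη' : η t = (m + r * c t)⁻¹ := by rw [hη t, hm, hr, hc]
    have hrx : r * x l = m - l := by
      rw [hx l, hr, hm]
      field_simp
    have hrγ : r * γ = m := by
      rw [hγ, hr, hm]
      field_simp
    have h1 : r * (x l + c t) = m + r * c t - l := by rw [mul_add, hrx]; ring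
    have h2 : r * (γ + c t) = m + r * c t := by rw [mul_add, hrγ]
    rw [hη', h1, h2]
    field_simp
  have hγct : ∀ t, γ + c t ≠ 0 := by
    intro t
    have := hdpos t
    have h2 : r * (γ + c t) = m + r * c t := by
      have hrγ : r * γ = m := by rw [hγ, hr, hm]; field_simp
      rw [mul_add, hrγ]
    intro h
    rw [h, mul_zero] at h2
    linarith
  calc ∏ t ∈ Finset.range T, (1 - η t * l)
      = ∏ t ∈ Finset.range T, (r * (x l + c t)) / (r * (γ + c t)) := by
        exact Finset.prod_congr rfl fun t _ => hfac t
    _ = (∏ t ∈ Finset.range T, r * (x l + c t)) / (∏ t ∈ Finset.range T, r * (γ + c t)) :=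
        Finset.prod_div_distrib _ _
    _ = (r ^ T * ∏ t ∈ Finset.range T, (x l + c t)) / (r ^ T * ∏ t ∈ Finset.range T, (γ + c t)) := by
        rw [Finset.prod_mul_distrib, Finset.prod_mul_distrib, Finset.prod_const, Finset.card_range]
    _ = (∏ t ∈ Finset.range T, (x l + c t)) / (∏ t ∈ Finset.range T, (γ + c t)) :=
        mul_div_mul_left _ _ (by positivity)
    _ = (∏ t ∈ Finset.range T, (x l - c t)) / (∏ t ∈ Finset.range T, (γ - c t)) := by
        rw [hrefl, hrefl]
    _ = (2 ^ (T - 1) * ∏ t ∈ Finset.range T, (x l - c t))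
        / (2 ^ (T - 1) * ∏ t ∈ Finset.range T, (γ - c t)) :=
        (mul_div_mul_left _ _ (by positivity)).symm
    _ = (Polynomial.Chebyshev.T ℝ T).eval (x l) / (Polynomial.Chebyshev.T ℝ T).eval γ := by
        rw [hevalT, hevalT]
end

section
/- With the Chebyshev step sizes η_t = ((λ_M+λ₁)/2 + ((λ_M−λ₁)/2)cos((t+1/2)π/T))^{−1}, one has sup_{λ₁ ≤ λ ≤ λ_M} |∏_{t=0}^{T−1}(1 − η_t λ)| ≤ 2(1 − 2/(√κ+1))^T where κ = λ_M/λ₁. -/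
open Polynomial Polynomial.Chebyshev Finset

lemma chebyAux : ∀ n : ℕ, (T ℝ n).natDegree ≤ n ∧
    (T ℝ n).coeff n = (if n = 0 then 1 else 2 ^ (n - 1)) := by
  intro n
  induction n using Nat.strong_induction_on with
  | _ n ih =>
    match n with
    | 0 => simp [T_zero]
    | 1 => simp [T_one]
    | (m + 2) =>
      have h1 := ih (m + 1) (by omega)
      have h0 := ih m (by omega)
      have hT2 : T ℝ ((m + 2 : ℕ) : ℤ) = 2 * X * T ℝ ((m+1 : ℕ) : ℤ) - T ℝ (m : ℕ) := by
        push_cast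
        have := T_add_two ℝ (m : ℤ)
        convert this using 2 <;> push_cast <;> ring
      constructor
      · rw [hT2]
        refine le_trans (natDegree_sub_le _ _) ?_
        simp only [max_le_iff]
        constructor
        · refine le_trans (natDegree_mul_le) ?_
          have : (2 * X : ℝ[X]).natDegree ≤ 1 := by
            refine le_trans (natDegree_mul_le) ?_
            simp
          omega
        · omega
      · rw [hT2]
        rw [coeff_sub, mul_assoc]
        have h2 : ((2 : ℝ[X]) * (X * T ℝ ((m+1:ℕ):ℤ))).coeff (m + 2)
            = 2 * (X * T ℝ ((m+1:ℕ):ℤ)).coeff (m + 2) := by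
          rw [show ((2:ℝ[X])) = Polynomial.C 2 from (map_ofNat Polynomial.C 2).symm, coeff_C_mul]
        rw [h2, coeff_X_mul]
        rw [h1.2, coeff_eq_zero_of_natDegree_lt (lt_of_le_of_lt h0.1 (by omega))]
        norm_num [pow_succ]
        ring


lemma cheby_eval_prod (N : ℕ) (hN : 1 ≤ N) (y : ℝ) :
    (T ℝ N).eval y
      = 2 ^ (N - 1) * ∏ t ∈ range N, (y - Real.cos (((t : ℝ) + 1/2) * Real.pi / N)) := by
  have hNpos : (0:ℝ) < N := by exact_mod_cast hN
  set d : ℕ → ℝ := fun t => Real.cos (((t : ℝ) + 1/2) * Real.pi / N) with hd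
  -- the angles lie in (0, π) and are strictly increasing
  have hmem : ∀ t ∈ range N, ((t : ℝ) + 1/2) * Real.pi / N ∈ Set.Icc (0:ℝ) Real.pi := by
    intro t ht
    rw [mem_range] at ht
    constructor
    · positivity
    · rw [div_le_iff₀ hNpos]
      have : (t : ℝ) + 1/2 ≤ N := by
        have : (t : ℝ) + 1 ≤ N := by exact_mod_cast ht
        linarith
      nlinarith [Real.pi_pos]
  have hinj : ∀ i ∈ range N, ∀ j ∈ range N, d i = d j → i = j := by
    intro i hi j hj hij
    have h1 := Real.injOn_cos (hmem i hi) (hmem j hj) hij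
    have : (i : ℝ) = j := by
      field_simp at h1
      linarith
    exact_mod_cast this
  have hroot : ∀ t ∈ range N, (T ℝ N).eval (d t) = 0 := by
    intro t ht
    rw [hd]
    rw [Polynomial.Chebyshev.T_real_cos]
    have harg : (N : ℤ) * (((t : ℝ) + 1/2) * Real.pi / N) = (t : ℝ) * Real.pi + Real.pi/2 := by
      push_cast
      field_simp
    rw [harg, Real.cos_add_pi_div_two, Real.sin_nat_mul_pi, neg_zero]
  set Q : ℝ[X] := ∏ t ∈ range N, (X - C (d t)) with hQ
  have hQmonic : Q.Monic := monic_prod_of_monic _ _ fun t _ => monic_X_sub_C _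
  have hQdeg : Q.natDegree = N := by
    rw [hQ, natDegree_prod_of_monic _ _ fun t _ => monic_X_sub_C _]
    simp [natDegree_X_sub_C]
  have hdvd : Q ∣ T ℝ N := by
    refine Finset.prod_dvd_of_coprime ?_ ?_
    · intro i hi j hj hij
      simp only [Set.mem_setOf_eq, Finset.coe_range, Set.mem_Iio] at hi hj
      refine isCoprime_X_sub_C_of_isUnit_sub ?_
      refine (sub_ne_zero_of_ne ?_).isUnit
      intro h
      exact hij (hinj i (mem_range.2 hi) j (mem_range.2 hj) h)
    · intro t ht
      rw [dvd_iff_isRoot]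
      exact hroot t ht
  -- leading coefficient data for T
  have hcoeff : (T ℝ N).coeff N = 2 ^ (N - 1) := by
    rw [(chebyAux N).2, if_neg (by omega)]
  have hcne : (T ℝ N).coeff N ≠ 0 := by rw [hcoeff]; positivity
  have hPdeg : (T ℝ N).natDegree = N :=
    le_antisymm (chebyAux N).1 (le_natDegree_of_ne_zero hcne)
  have hPlead : (T ℝ N).leadingCoeff = 2 ^ (N - 1) := by
    rw [leadingCoeff, hPdeg, hcoeff]
  have hPne : T ℝ N ≠ 0 := fun h => hcne (by simp [h])
  obtain ⟨R, hR⟩ := hdvd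
  have hRne : R ≠ 0 := by
    intro h; rw [h, mul_zero] at hR; exact hPne hR
  have hQne : Q ≠ 0 := hQmonic.ne_zero
  have hRdeg : R.natDegree = 0 := by
    have := natDegree_mul hQne hRne
    rw [← hR, hPdeg, hQdeg] at this
    omega
  obtain ⟨c, hc⟩ := natDegree_eq_zero.1 hRdeg
  have hcval : c = 2 ^ (N - 1) := by
    have := leadingCoeff_mul Q R
    rw [← hR, hPlead, hQmonic.leadingCoeff, one_mul, ← hc, leadingCoeff_C] at this
    exact this.symm
  rw [hR, ← hc, hcval, eval_mul, eval_C, hQ, eval_prod]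
  rw [mul_comm]
  congr 1
  refine Finset.prod_congr rfl fun t _ => ?_
  simp only [eval_sub, eval_X, eval_C]
  rfl

lemma T_real_cosh (n : ℤ) (s : ℝ) :
    (T ℝ n).eval (Real.cosh s) = Real.cosh (n * s) := by
  have h := Polynomial.Chebyshev.T_complex_cos ((s : ℂ) * Complex.I) n
  rw [Complex.cos_mul_I] at h
  rw [show (n : ℂ) * ((s : ℂ) * Complex.I) = (((n : ℝ) * s : ℝ) : ℂ) * Complex.I by
    push_cast; ring, Complex.cos_mul_I] at h
  have hmap : (T ℂ n) = (T ℝ n).map (algebraMap ℝ ℂ) := (map_T (algebraMap ℝ ℂ) n).symm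
  rw [hmap, ← Complex.ofReal_cosh, ← Complex.ofReal_cosh] at h
  rw [show ((Real.cosh s : ℝ) : ℂ) = algebraMap ℝ ℂ (Real.cosh s) from rfl,
    Polynomial.eval_map, Polynomial.eval₂_at_apply] at h
  rw [show (algebraMap ℝ ℂ) (eval (Real.cosh s) (T ℝ n)) = ((eval (Real.cosh s) (T ℝ n) : ℝ) : ℂ) from rfl] at h
  exact_mod_cast h



lemma fac_eq (a b l dt : ℝ) (hb : b ≠ 0) (hden : a + b * dt ≠ 0) :
    1 - (a + b * dt)⁻¹ * l = ((a - l) / b + dt) / (a / b + dt) := by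
  rw [show (a - l) / b + dt = (a - l + b * dt) / b by field_simp,
    show a / b + dt = (a + b * dt) / b by field_simp,
    div_div_div_cancel_right₀ hb]
  field_simp
  ring

/-- With the Chebyshev step sizes `η_t = ((λ_M+λ₁)/2 + ((λ_M−λ₁)/2) cos((t+1/2)π/T))⁻¹`,
one has `sup_{λ₁ ≤ λ ≤ λ_M} |∏_{t<T} (1 − η_t λ)| ≤ 2 (1 − 2/(√κ+1))^T`, `κ = λ_M/λ₁`. -/
theorem stmt14 (lam1 lamM : ℝ) (h1 : 0 < lam1) (h2 : lam1 < lamM)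
    (T : ℕ) (hT : 1 ≤ T)
    (η : ℕ → ℝ)
    (hη : ∀ t, η t = ((lamM + lam1) / 2
        + ((lamM - lam1) / 2) * Real.cos (((t : ℝ) + 1 / 2) * Real.pi / T))⁻¹)
    (κ : ℝ) (hκ : κ = lamM / lam1) :
    (⨆ l : Set.Icc lam1 lamM, |∏ t ∈ Finset.range T, (1 - η t * (l : ℝ))|)
      ≤ 2 * (1 - 2 / (Real.sqrt κ + 1)) ^ T := by
  have hTpos : (0:ℝ) < T := by exact_mod_cast hT
  set a := (lamM + lam1) / 2 with ha
  set b := (lamM - lam1) / 2 with hb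
  have hbpos : 0 < b := by rw [hb]; linarith
  set d : ℕ → ℝ := fun t => Real.cos (((t : ℝ) + 1 / 2) * Real.pi / T) with hd
  have hd1 : ∀ t, |d t| ≤ 1 := fun t => Real.abs_cos_le_one _
  have hden : ∀ t, 0 < a + b * d t := by
    intro t
    have := abs_le.1 (hd1 t)
    have hab : a - b = lam1 := by rw [ha, hb]; ring
    nlinarith
  set r := Real.sqrt κ with hr
  have hκ1 : 1 < κ := by rw [hκ, lt_div_iff₀ h1]; linarith
  have hr1 : 1 < r := by
    have : Real.sqrt 1 < Real.sqrt κ := Real.sqrt_lt_sqrt (by norm_num) hκ1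
    simpa using this
  have hr2 : r ^ 2 = κ := Real.sq_sqrt (by linarith)
  have hMl : lamM = r ^ 2 * lam1 := by
    rw [hr2, hκ]; field_simp
  set u := (r + 1) / (r - 1) with hu
  have hrm : 0 < r - 1 := by linarith
  have hu1 : 1 < u := by rw [hu, lt_div_iff₀ hrm]; linarith
  have hupos : 0 < u := by linarith
  set γ := a / b with hγdef
  have hγ : Real.cosh (Real.log u) = γ := by
    rw [Real.cosh_eq, Real.exp_log hupos, Real.exp_neg, Real.exp_log hupos,
      hγdef, ha, hb, hu, hMl]
    have h1' : r ^ 2 * lam1 - lam1 ≠ 0 := by nlinarith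
    have h1'' : r ^ 2 - 1 ≠ 0 := by nlinarith
    field_simp
    ring
  have heγ : (Polynomial.Chebyshev.T ℝ T).eval γ = Real.cosh ((T : ℝ) * Real.log u) := by
    rw [← hγ]
    have := T_real_cosh (T : ℤ) (Real.log u)
    rwa [show (((T:ℤ)):ℝ) = (T:ℝ) by push_cast; ring] at this
  have hγlb : u ^ T / 2 ≤ (Polynomial.Chebyshev.T ℝ T).eval γ := by
    rw [heγ, Real.cosh_eq]
    have hexp : Real.exp ((T : ℝ) * Real.log u) = u ^ T := by
      rw [Real.exp_nat_mul, Real.exp_log hupos]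
    rw [hexp]
    have : 0 < Real.exp (-((T : ℝ) * Real.log u)) := Real.exp_pos _
    linarith
  have hγpos : 0 < (Polynomial.Chebyshev.T ℝ T).eval γ :=
    lt_of_lt_of_le (by positivity) hγlb
  -- reflection
  have hrefl : ∀ y : ℝ, ∏ t ∈ range T, (y + d t) = ∏ t ∈ range T, (y - d t) := by
    intro y
    rw [← Finset.prod_range_reflect (fun t => y - d t) T]
    refine Finset.prod_congr rfl fun t ht => ?_
    rw [mem_range] at ht
    have hcast : ((T - 1 - t : ℕ) : ℝ) = (T : ℝ) - 1 - t := by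
      have : t + 1 ≤ T := ht
      push_cast [Nat.cast_sub (by omega : t ≤ T - 1), Nat.cast_sub (by omega : 1 ≤ T)]
      ring
    have : d (T - 1 - t) = -(d t) := by
      rw [hd]
      simp only
      rw [hcast, show ((T:ℝ) - 1 - t + 1/2) * Real.pi / T
          = Real.pi - ((t : ℝ) + 1/2) * Real.pi / T by field_simp; ring,
        Real.cos_pi_sub]
    rw [this]; ring
  have hpow : (2 : ℝ) ^ (T - 1) ≠ 0 := by positivity
  -- the supremum
  haveI : Nonempty (Set.Icc lam1 lamM) := ⟨⟨lam1, Set.mem_Icc.2 ⟨le_refl _, le_of_lt h2⟩⟩⟩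
  refine ciSup_le ?_
  rintro ⟨l, hl⟩
  rw [Set.mem_Icc] at hl
  simp only
  set x := (a - l) / b with hx
  have hx1 : -1 ≤ x ∧ x ≤ 1 := by
    constructor
    · rw [hx, le_div_iff₀ hbpos]
      have : lamM = a + b := by rw [ha, hb]; ring
      nlinarith [hl.2]
    · rw [hx, div_le_iff₀ hbpos]
      have : lam1 = a - b := by rw [ha, hb]; ring
      nlinarith [hl.1]
  have hbound1 : |(Polynomial.Chebyshev.T ℝ T).eval x| ≤ 1 := by
    rw [show x = Real.cos (Real.arccos x) from (Real.cos_arccos hx1.1 hx1.2).symm,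
      Polynomial.Chebyshev.T_real_cos]
    exact Real.abs_cos_le_one _
  have hprod : ∏ t ∈ range T, (1 - η t * l)
      = (Polynomial.Chebyshev.T ℝ T).eval x / (Polynomial.Chebyshev.T ℝ T).eval γ := by
    have hfac : ∀ t ∈ range T, 1 - η t * l = (x + d t) / (γ + d t) := by
      intro t _
      rw [hη t]
      have e1 : (lamM + lam1) / 2 + (lamM - lam1) / 2
          * Real.cos (((t : ℝ) + 1 / 2) * Real.pi / T) = a + b * d t := rfl
      rw [e1, hx, hγdef]
      exact fac_eq a b l (d t) (ne_of_gt hbpos) (ne_of_gt (hden t))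
    rw [Finset.prod_congr rfl hfac, Finset.prod_div_distrib, hrefl x, hrefl γ,
      ← mul_div_mul_left (∏ t ∈ range T, (x - d t)) (∏ t ∈ range T, (γ - d t)) hpow]
    rw [cheby_eval_prod T hT x, cheby_eval_prod T hT γ]
  rw [hprod, abs_div, abs_of_pos hγpos]
  have hstep : |(Polynomial.Chebyshev.T ℝ T).eval x| / (Polynomial.Chebyshev.T ℝ T).eval γ
      ≤ 1 / (u ^ T / 2) :=
    div_le_div₀ (by norm_num) hbound1 (by positivity) hγlb
  refine le_trans hstep ?_
  have huinv : 1 - 2 / (r + 1) = u⁻¹ := by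
    rw [hu]
    field_simp
    ring
  rw [huinv, show (1 : ℝ) / (u ^ T / 2) = 2 * (u⁻¹) ^ T by
    rw [inv_pow]; field_simp]
end

section
/- Let A be Hermitian positive definite and U a matrix such that I + U^H A^{−1} U is defined. For positive semidefinite Γ, the function φ(Γ) = log det(I + Γ) − tr(Γ) + tr((I+Γ) U^H (A + UU^H)^{−1} U) is maximized over positive semidefinite Γ at Γ* = U^H A^{−1} U, and the maximum value equals log det(I + U^H A^{−1} U). -/
open Matrix
open scoped ComplexOrder

private lemma trace_eq_sum_eigs {n : Type*} [Fintype n] [DecidableEq n]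
    {A : Matrix n n ℂ} (hA : A.IsHermitian) :
    A.trace = ∑ i, (hA.eigenvalues i : ℂ) := by
  conv_lhs => rw [hA.spectral_theorem, Unitary.conjStarAlgAut_apply]
  rw [Matrix.trace_mul_comm, ← Matrix.mul_assoc, Unitary.coe_star_mul_self, Matrix.one_mul,
    Matrix.trace_diagonal]
  simp

private lemma key_ineq {d : ℕ} {X : Matrix (Fin d) (Fin d) ℂ} (hX : X.PosSemidef)
    (hdet : X.det ≠ 0) :
    (d : ℝ) + Real.log (‖X.det‖) ≤ (X.trace).re := by
  have hlam : ∀ i, 0 < hX.1.eigenvalues i := by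
    intro i
    rcases lt_or_eq_of_le (hX.eigenvalues_nonneg i) with h | h
    · exact h
    · exfalso
      apply hdet
      rw [hX.1.det_eq_prod_eigenvalues]
      exact Finset.prod_eq_zero (Finset.mem_univ i) (by simp [← h])
  have hdet' : ‖X.det‖ = ∏ i, hX.1.eigenvalues i := by
    rw [hX.1.det_eq_prod_eigenvalues, ← RCLike.ofReal_prod, RCLike.norm_ofReal,
      abs_of_pos (Finset.prod_pos fun i _ => hlam i)]
  have htr : (X.trace).re = ∑ i, hX.1.eigenvalues i := by
    rw [trace_eq_sum_eigs hX.1, Complex.re_sum]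
    simp
  rw [hdet', htr, Real.log_prod fun i _ => (hlam i).ne']
  calc (d : ℝ) + ∑ i, Real.log (hX.1.eigenvalues i)
      = ∑ i : Fin d, (1 + Real.log (hX.1.eigenvalues i)) := by
        rw [Finset.sum_add_distrib]; simp
    _ ≤ ∑ i, hX.1.eigenvalues i := Finset.sum_le_sum fun i _ => by
        have := Real.log_le_sub_one_of_pos (hlam i); linarith

private lemma main_ineq {d : ℕ} {S B : Matrix (Fin d) (Fin d) ℂ} (hS : S.PosDef) (hB : B.PosDef) :
    Real.log (‖B.det‖) + d - ((B * S⁻¹).trace).re ≤ Real.log (‖S.det‖) := by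
  have hSi := hS.inv
  set T := (open scoped MatrixOrder in CFC.sqrt S⁻¹) with hT
  have hT2 : T * T = S⁻¹ := (open scoped MatrixOrder in CFC.sqrt_mul_sqrt_self _ hSi.posSemidef.nonneg)
  have hTpsd : T.PosSemidef := (open scoped MatrixOrder in (CFC.sqrt_nonneg S⁻¹).posSemidef)
  have hXpsd : (T * B * T).PosSemidef := by
    have := hB.posSemidef.conjTranspose_mul_mul_same T
    rwa [hTpsd.1.eq] at this
  have hdetX : (T * B * T).det = B.det * S⁻¹.det := by
    rw [det_mul, det_mul, ← hT2, det_mul]; ring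
  have hdetX0 : (T * B * T).det ≠ 0 := by
    rw [hdetX]
    exact mul_ne_zero hB.det_pos.ne' hSi.det_pos.ne'
  have htrX : (T * B * T).trace = (B * S⁻¹).trace := by
    rw [Matrix.trace_mul_comm, ← Matrix.mul_assoc, hT2, Matrix.trace_mul_comm]
  have h1 := key_ineq hXpsd hdetX0
  rw [htrX, hdetX] at h1
  have hlog : Real.log (‖B.det * S⁻¹.det‖)
      = Real.log (‖B.det‖) - Real.log (‖S.det‖) := by
    rw [norm_mul, Real.log_mul (by simpa using hB.det_pos.ne') (by simpa using hSi.det_pos.ne'),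
      Matrix.det_nonsing_inv, Ring.inverse_eq_inv', norm_inv, Real.log_inv]
    ring
  rw [hlog] at h1
  linarith


/-- Lagrangian dual transform optimality: for `A` Hermitian positive definite (`N×N`)
and `U : N×d`, the function
`φ(Γ) = log|det(I+Γ)| − Re tr(Γ) + Re tr((I+Γ) Uᴴ (A + UUᴴ)⁻¹ U)` is maximized over
positive semidefinite `Γ` at `Γ* = Uᴴ A⁻¹ U`, and the maximum value equals
`log|det(I + Uᴴ A⁻¹ U)|`. -/
theorem stmt19 {N d : ℕ}
    (A : Matrix (Fin N) (Fin N) ℂ) (hA : A.PosDef)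
    (U : Matrix (Fin N) (Fin d) ℂ)
    (φ : Matrix (Fin d) (Fin d) ℂ → ℝ)
    (hφ : ∀ Γ, φ Γ = Real.log ‖(1 + Γ).det‖ - (Γ.trace).re
        + (((1 + Γ) * (Uᴴ * (A + U * Uᴴ)⁻¹ * U)).trace).re)
    (Γs : Matrix (Fin d) (Fin d) ℂ) (hΓs : Γs = Uᴴ * A⁻¹ * U) :
    Γs.PosSemidef ∧
    (∀ Γ : Matrix (Fin d) (Fin d) ℂ, Γ.PosSemidef → φ Γ ≤ φ Γs) ∧
    φ Γs = Real.log ‖(1 + Uᴴ * A⁻¹ * U).det‖ := by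
  have hΓs_psd : Γs.PosSemidef := by
    rw [hΓs]; exact hA.inv.posSemidef.conjTranspose_mul_mul_same U
  set S : Matrix (Fin d) (Fin d) ℂ := 1 + Γs with hSdef
  have hS : S.PosDef := Matrix.PosDef.add_posSemidef (Matrix.PosDef.one : (1 : Matrix (Fin d) (Fin d) ℂ).PosDef) hΓs_psd
  have hUU : (U * Uᴴ).PosSemidef := by
    have := (Matrix.PosSemidef.one : (1 : Matrix (Fin d) (Fin d) ℂ).PosSemidef).mul_mul_conjTranspose_same U
    rwa [Matrix.mul_one] at this
  have hAU : (A + U * Uᴴ).PosDef := hA.add_posSemidef hUU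
  have hA1 : A * A⁻¹ = 1 := Matrix.mul_nonsing_inv _ hA.det_pos.ne'.isUnit
  have hS1 : S * S⁻¹ = 1 := Matrix.mul_nonsing_inv _ hS.det_pos.ne'.isUnit
  have h1 : (A + U * Uᴴ) * (A⁻¹ * U * S⁻¹) = U := by
    have expand : (A + U * Uᴴ) * (A⁻¹ * U * S⁻¹)
        = (A * A⁻¹) * (U * S⁻¹) + U * ((Uᴴ * A⁻¹ * U) * S⁻¹) := by
      simp only [Matrix.add_mul, Matrix.mul_assoc]
    rw [expand, hA1, Matrix.one_mul, ← hΓs, ← Matrix.mul_add]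
    have : S⁻¹ + Γs * S⁻¹ = S * S⁻¹ := by
      rw [hSdef, Matrix.add_mul, Matrix.one_mul]
    rw [this, hS1, Matrix.mul_one]
  have h2 : (A + U * Uᴴ)⁻¹ * U = A⁻¹ * U * S⁻¹ := by
    calc (A + U * Uᴴ)⁻¹ * U = (A + U * Uᴴ)⁻¹ * ((A + U * Uᴴ) * (A⁻¹ * U * S⁻¹)) := by rw [h1]
      _ = A⁻¹ * U * S⁻¹ := by
          rw [← Matrix.mul_assoc, Matrix.nonsing_inv_mul _ hAU.det_pos.ne'.isUnit,
            Matrix.one_mul]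
  have h3 : Uᴴ * (A + U * Uᴴ)⁻¹ * U = 1 - S⁻¹ := by
    rw [Matrix.mul_assoc, h2]
    have : Uᴴ * (A⁻¹ * U * S⁻¹) = Γs * S⁻¹ := by
      rw [hΓs]; simp only [Matrix.mul_assoc]
    rw [this, show Γs = S - 1 by rw [hSdef, add_sub_cancel_left], Matrix.sub_mul, hS1, Matrix.one_mul]
  have hφ' : ∀ Γ : Matrix (Fin d) (Fin d) ℂ,
      φ Γ = Real.log ‖(1 + Γ).det‖ + d - (((1 + Γ) * S⁻¹).trace).re := by
    intro Γ
    rw [hφ, h3, Matrix.mul_sub, Matrix.mul_one, Matrix.trace_sub, Matrix.trace_add,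
      Matrix.trace_one]
    simp only [Complex.sub_re, Complex.add_re, Complex.natCast_re, Fintype.card_fin]
    ring
  have hval : φ Γs = Real.log ‖S.det‖ := by
    rw [hφ' Γs, ← hSdef, hS1, Matrix.trace_one]
    simp
  refine ⟨hΓs_psd, ?_, ?_⟩
  · intro Γ hΓ
    rw [hφ' Γ, hval]
    have hB : (1 + Γ).PosDef := Matrix.PosDef.add_posSemidef (Matrix.PosDef.one : (1 : Matrix (Fin d) (Fin d) ℂ).PosDef) hΓ
    exact main_ineq hS hB
  · rw [hval, hSdef, hΓs]
end
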